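/- Let E₀, E₁, E₂ be finite-dimensional real inner product spaces and let d₁ : E₁ → E₀ and d₂ : E₂ → E₁ be linear maps satisfying d₁ ∘ d₂ = 0, with L₁ = d₁† ∘ d₁ + d₂ ∘ d₂†. Then the dimension of ker(L₁) equals dim ker(d₁) − dim range(d₂); i.e., dim ker(L₁) is the first Betti number of the chain complex (E₂, E₁, E₀). -/

import Mathlib

/-- If `d₁ ∘ d₂ = 0`, then `dim ker L₁ = dim ker d₁ − dim range d₂`, the first
Betti number of the chain complex `(E₂, E₁, E₀)`. -/
theorem dim_ker_hodge_laplacian_eq_betti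
    {E₀ E₁ E₂ : Type*}
    [NormedAddCommGroup E₀] [InnerProductSpace ℝ E₀] [FiniteDimensional ℝ E₀]
    [NormedAddCommGroup E₁] [InnerProductSpace ℝ E₁] [FiniteDimensional ℝ E₁]
    [NormedAddCommGroup E₂] [InnerProductSpace ℝ E₂] [FiniteDimensional ℝ E₂]
    (d₁ : E₁ →ₗ[ℝ] E₀) (d₂ : E₂ →ₗ[ℝ] E₁)
    (hchain : d₁ ∘ₗ d₂ = 0) :
    Module.finrank ℝ
        (LinearMap.ker (LinearMap.adjoint d₁ ∘ₗ d₁ + d₂ ∘ₗ LinearMap.adjoint d₂))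
      = Module.finrank ℝ (LinearMap.ker d₁) - Module.finrank ℝ (LinearMap.range d₂) := by
  set K := LinearMap.ker d₁
  set R := LinearMap.range d₂
  have hRK : R ≤ K := by
    rintro x ⟨y, rfl⟩
    have := congrArg (fun f => f y) hchain
    simpa [K, LinearMap.mem_ker] using this
  -- ker of adjoint d₂ is orthogonal complement of range d₂
  have hker_adj : LinearMap.ker (LinearMap.adjoint d₂) = Rᗮ := by
    ext x
    constructor
    · intro hx u hu
      obtain ⟨z, rfl⟩ := hu
      have h : (inner ℝ ((LinearMap.adjoint d₂) x) z : ℝ) = inner ℝ x (d₂ z) :=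
        LinearMap.adjoint_inner_left d₂ z x
      rw [LinearMap.mem_ker.mp hx, inner_zero_left] at h
      rw [real_inner_comm]
      exact h.symm
    · intro hx
      apply ext_inner_right ℝ
      intro z
      have h := hx (d₂ z) ⟨z, rfl⟩
      rw [LinearMap.adjoint_inner_left, inner_zero_left, real_inner_comm]
      exact h
  -- kernel of Laplacian
  have hkerL : LinearMap.ker (LinearMap.adjoint d₁ ∘ₗ d₁ + d₂ ∘ₗ LinearMap.adjoint d₂)
      = K ⊓ Rᗮ := by
    ext x
    simp only [LinearMap.mem_ker, LinearMap.add_apply, LinearMap.comp_apply,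
      Submodule.mem_inf]
    constructor
    · intro hx
      have h0 : (inner ℝ ((LinearMap.adjoint d₁) (d₁ x) + d₂ ((LinearMap.adjoint d₂) x)) x : ℝ)
          = 0 := by rw [hx]; simp
      rw [inner_add_left] at h0
      have e1 : (inner ℝ ((LinearMap.adjoint d₁) (d₁ x)) x : ℝ) = inner ℝ (d₁ x) (d₁ x) :=
        LinearMap.adjoint_inner_left d₁ x (d₁ x)
      have e2 : (inner ℝ (d₂ ((LinearMap.adjoint d₂) x)) x : ℝ)
          = inner ℝ ((LinearMap.adjoint d₂) x) ((LinearMap.adjoint d₂) x) := by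
        rw [real_inner_comm]
        exact (LinearMap.adjoint_inner_left d₂ ((LinearMap.adjoint d₂) x) x).symm
      rw [e1, e2] at h0
      have h1 : (inner ℝ (d₁ x) (d₁ x) : ℝ) = 0 ∧
          (inner ℝ ((LinearMap.adjoint d₂) x) ((LinearMap.adjoint d₂) x) : ℝ) = 0 := by
        constructor <;> nlinarith [real_inner_self_nonneg (x := d₁ x),
          real_inner_self_nonneg (x := (LinearMap.adjoint d₂) x), h0]
      have hd1 : d₁ x = 0 := inner_self_eq_zero.mp h1.1
      have hd2 : (LinearMap.adjoint d₂) x = 0 := inner_self_eq_zero.mp h1.2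
      exact ⟨hd1, hker_adj ▸ LinearMap.mem_ker.mpr hd2⟩
    · rintro ⟨h1, h2⟩
      have hd2 : (LinearMap.adjoint d₂) x = 0 := by
        rw [← hker_adj] at h2; exact h2
      rw [h1, hd2]
      simp
  rw [hkerL]
  -- dimension count: R ⊔ (K ⊓ Rᗮ) = K and R ⊓ (K ⊓ Rᗮ) = ⊥
  have hsup : R ⊔ (K ⊓ Rᗮ) = K := by
    apply le_antisymm
    · exact sup_le hRK inf_le_left
    · intro x hx
      have hmem : x ∈ R ⊔ Rᗮ := by
        rw [Submodule.sup_orthogonal_of_hasOrthogonalProjection]; trivial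
      obtain ⟨p, hp, q, hq, rfl⟩ := Submodule.mem_sup.mp hmem
      refine Submodule.mem_sup.mpr ⟨p, hp, q, ⟨?_, hq⟩, rfl⟩
      have : p ∈ K := hRK hp
      have : p + q - p ∈ K := K.sub_mem hx this
      simpa using this
  have hinf : R ⊓ (K ⊓ Rᗮ) = ⊥ := by
    rw [← le_bot_iff]
    intro x hx
    have h1 : x ∈ R := hx.1
    have h2 : x ∈ Rᗮ := hx.2.2
    have : x = 0 := by
      have := h2 x h1
      exact inner_self_eq_zero.mp (by rw [real_inner_comm] at this; exact this)
    simp [this]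
  have := Submodule.finrank_sup_add_finrank_inf_eq R (K ⊓ Rᗮ)
  rw [hsup, hinf] at this
  simp only [finrank_bot, add_zero] at this
  omega
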